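/- Let V(x) = σ_k(γ(x) − γ(0)) + ε‖x‖² where γ is the ICNN defined by z₁ = σ₀(w₀x + b₀), z_{i+1} = σ_i(v_i z_i + w_i x + b_i), γ(x) = z_k, with each activation σ_i being 1-Lipschitz. Then whenever V is differentiable at x, ‖∇V(x)‖ ≤ 2ε‖x‖ + Σ_{i=0}^{k−1} (Π_{j=i+1}^{k−1} ‖v_j‖) ‖w_i‖. -/

import Mathlib

open scoped RealInnerProductSpace

open Finset
theorem ICNN_gradient_bound {n : ℕ} (k : ℕ) (hk : 1 ≤ k)
    (σ : ℕ → ℝ → ℝ) (hσ : ∀ i, LipschitzWith 1 (σ i))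
    (w : ℕ → EuclideanSpace ℝ (Fin n)) (v : ℕ → ℝ) (hv : ∀ j, 0 < v j) (b : ℕ → ℝ)
    (ε : ℝ) (hε : 0 < ε)
    (z : ℕ → EuclideanSpace ℝ (Fin n) → ℝ)
    (hz1 : ∀ x, z 1 x = σ 0 (⟪w 0, x⟫ + b 0))
    (hzs : ∀ i, 1 ≤ i → i < k → ∀ x, z (i + 1) x = σ i (v i * z i x + ⟪w i, x⟫ + b i))
    (γ : EuclideanSpace ℝ (Fin n) → ℝ) (hγ : ∀ x, γ x = z k x)
    (V : EuclideanSpace ℝ (Fin n) → ℝ)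
    (hV : ∀ x, V x = σ k (γ x - γ 0) + ε * ‖x‖ ^ 2) :
    ∀ x G, HasGradientAt V G x →
      ‖G‖ ≤ 2 * ε * ‖x‖ + ∑ i ∈ Finset.range k, (∏ j ∈ Finset.Ico (i + 1) k, v j) * ‖w i‖ := by
  set L : ℕ → ℝ := fun m => ∑ i ∈ range m, (∏ j ∈ Ico (i + 1) m, v j) * ‖w i‖ with hL
  have key : ∀ i, 1 ≤ i → i ≤ k →
      ∀ x y : EuclideanSpace ℝ (Fin n), |z i x - z i y| ≤ L i * ‖x - y‖ := by
    intro i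
    induction i with
    | zero => omega
    | succ m ih =>
      intro _ hmk x y
      rcases Nat.eq_zero_or_pos m with hm0 | hm1
      · subst hm0
        have hb : |z 1 x - z 1 y| ≤ |⟪w 0, x⟫ - ⟪w 0, y⟫| := by
          rw [hz1 x, hz1 y]
          have := (hσ 0).dist_le_mul (⟪w 0, x⟫ + b 0) (⟪w 0, y⟫ + b 0)
          simpa [Real.dist_eq, abs_sub_comm] using this
        have h2 : |⟪w 0, x⟫ - ⟪w 0, y⟫| ≤ ‖w 0‖ * ‖x - y‖ := by
          rw [← inner_sub_right]
          exact abs_real_inner_le_norm _ _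
        have hL1 : L 1 = ‖w 0‖ := by simp [hL]
        rw [hL1]; exact hb.trans h2
      · have hmk' : m < k := hmk
        have ihm := ih hm1 (le_of_lt hmk') x y
        have hb : |z (m + 1) x - z (m + 1) y|
            ≤ |(v m * z m x + ⟪w m, x⟫ + b m) - (v m * z m y + ⟪w m, y⟫ + b m)| := by
          rw [hzs m hm1 hmk' x, hzs m hm1 hmk' y]
          have := (hσ m).dist_le_mul (v m * z m x + ⟪w m, x⟫ + b m)
            (v m * z m y + ⟪w m, y⟫ + b m)
          simpa [Real.dist_eq] using this
        have h2 : |(v m * z m x + ⟪w m, x⟫ + b m) - (v m * z m y + ⟪w m, y⟫ + b m)|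
            ≤ v m * |z m x - z m y| + ‖w m‖ * ‖x - y‖ := by
          have heq : (v m * z m x + ⟪w m, x⟫ + b m) - (v m * z m y + ⟪w m, y⟫ + b m)
              = v m * (z m x - z m y) + ⟪w m, x - y⟫ := by
            rw [inner_sub_right]; ring
          rw [heq]
          calc |v m * (z m x - z m y) + ⟪w m, x - y⟫|
              ≤ |v m * (z m x - z m y)| + |⟪w m, x - y⟫| := abs_add_le _ _
            _ ≤ v m * |z m x - z m y| + ‖w m‖ * ‖x - y‖ := by
                gcongr
                · rw [abs_mul, abs_of_pos (hv m)]
                · exact abs_real_inner_le_norm _ _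
        have hrec : L (m + 1) = v m * L m + ‖w m‖ := by
          rw [hL]
          simp only [Finset.sum_range_succ, Finset.Ico_self, Finset.prod_empty, one_mul]
          congr 1
          rw [Finset.mul_sum]
          refine Finset.sum_congr rfl fun t ht => ?_
          have htm : t < m := Finset.mem_range.mp ht
          rw [Finset.prod_Ico_succ_top (by omega : t + 1 ≤ m)]
          ring
        rw [hrec]
        calc |z (m + 1) x - z (m + 1) y| ≤ v m * |z m x - z m y| + ‖w m‖ * ‖x - y‖ :=
              hb.trans h2
          _ ≤ v m * (L m * ‖x - y‖) + ‖w m‖ * ‖x - y‖ := by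
              gcongr; exact (hv m).le
          _ = (v m * L m + ‖w m‖) * ‖x - y‖ := by ring
  have hLk0 : 0 ≤ L k := by
    apply Finset.sum_nonneg
    intro i _
    exact mul_nonneg (Finset.prod_nonneg fun j _ => (hv j).le) (norm_nonneg _)
  set f : EuclideanSpace ℝ (Fin n) → ℝ := fun y => V y - ε * ‖y‖ ^ 2 with hf
  have hflip : LipschitzWith (L k).toNNReal f := by
    apply LipschitzWith.of_dist_le_mul
    intro x y
    rw [Real.dist_eq, Real.coe_toNNReal _ hLk0]
    have hfx : ∀ u : EuclideanSpace ℝ (Fin n), f u = σ k (z k u - z k 0) := by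
      intro u; simp [hf, hV u, hγ]
    rw [hfx x, hfx y]
    calc |σ k (z k x - z k 0) - σ k (z k y - z k 0)| ≤ |z k x - z k y| := by
          have := (hσ k).dist_le_mul (z k x - z k 0) (z k y - z k 0)
          simpa [Real.dist_eq] using this
      _ ≤ L k * ‖x - y‖ := key k hk le_rfl x y
      _ = L k * dist x y := by rw [dist_eq_norm]
  intro x G hG
  have hg : HasFDerivAt (fun y : EuclideanSpace ℝ (Fin n) => ε * ‖y‖ ^ 2)
      (InnerProductSpace.toDual ℝ (EuclideanSpace ℝ (Fin n)) ((2 * ε) • x)) x := by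
    have h1 : HasFDerivAt (fun y : EuclideanSpace ℝ (Fin n) => ⟪y, y⟫)
        ((fderivInnerCLM ℝ (x, x)).comp
          ((ContinuousLinearMap.id ℝ _).prod (ContinuousLinearMap.id ℝ _))) x :=
      (hasFDerivAt_id x).inner ℝ (hasFDerivAt_id x)
    have h2 : HasFDerivAt (fun y : EuclideanSpace ℝ (Fin n) => ε * ⟪y, y⟫)
        (ε • ((fderivInnerCLM ℝ (x, x)).comp
          ((ContinuousLinearMap.id ℝ _).prod (ContinuousLinearMap.id ℝ _)))) x := by
      exact h1.const_smul ε
    have heq : (ε • ((fderivInnerCLM ℝ (x, x)).comp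
          ((ContinuousLinearMap.id ℝ _).prod (ContinuousLinearMap.id ℝ _))))
        = InnerProductSpace.toDual ℝ (EuclideanSpace ℝ (Fin n)) ((2 * ε) • x) := by
      ext h
      simp only [ContinuousLinearMap.smul_apply, ContinuousLinearMap.coe_comp',
        Function.comp_apply, ContinuousLinearMap.prod_apply, ContinuousLinearMap.coe_id',
        id, fderivInnerCLM_apply, InnerProductSpace.toDual_apply_apply, smul_eq_mul]
      rw [real_inner_smul_left, real_inner_comm h x]
      ring
    rw [heq] at h2
    have hfun : (fun y : EuclideanSpace ℝ (Fin n) => ε * ‖y‖ ^ 2)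
        = fun y : EuclideanSpace ℝ (Fin n) => ε * ⟪y, y⟫ := by
      funext y; rw [real_inner_self_eq_norm_sq]
    rw [hfun]; exact h2
  have hGf : HasFDerivAt V (InnerProductSpace.toDual ℝ (EuclideanSpace ℝ (Fin n)) G) x :=
    hG.hasFDerivAt
  have hsub : HasFDerivAt f
      (InnerProductSpace.toDual ℝ (EuclideanSpace ℝ (Fin n)) (G - (2 * ε) • x)) x := by
    have := hGf.sub hg
    rwa [← map_sub] at this
  have hfd : fderiv ℝ f x
      = InnerProductSpace.toDual ℝ (EuclideanSpace ℝ (Fin n)) (G - (2 * ε) • x) := hsub.fderiv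
  have hnorm : ‖G - (2 * ε) • x‖ ≤ L k := by
    have h := norm_fderiv_le_of_lipschitz ℝ (x₀ := x) hflip
    rw [hfd] at h
    rw [← (InnerProductSpace.toDual ℝ (EuclideanSpace ℝ (Fin n))).norm_map (G - (2 * ε) • x)]
    exact h.trans (by rw [Real.coe_toNNReal _ hLk0])
  have hsm : ‖(2 * ε) • x‖ = 2 * ε * ‖x‖ := by
    rw [norm_smul, Real.norm_eq_abs, abs_of_pos (by linarith)]
  have htri : ‖G‖ ≤ ‖G - (2 * ε) • x‖ + ‖(2 * ε) • x‖ := by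
    simpa using norm_add_le (G - (2 * ε) • x) ((2 * ε) • x)
  rw [hL] at hnorm
  rw [hsm] at htri
  linarith
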